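/- arXiv:1911.05549 — 4 statements merged into one kernel-verified Lean document; each statement's English description precedes it below -/
import Mathlib

section
/- Let R be a henselian local ring with residue field κ and residue map π : R → κ. Let K be a field equipped with a ring homomorphism K → R, and suppose that, via the composite K → R → κ, the field κ is a separable algebraic extension of K. Then R contains a coefficient field: there exists a ring homomorphism σ : κ → R such that π ∘ σ is the identity on κ. -/
open Polynomial IsLocalRing IntermediateField

/-- Uniqueness of a lift of a simple root. -/
theorem aux_root_unique {R : Type*} [CommRing R] [IsLocalRing R] (q : R[X])
    {x : IsLocalRing.ResidueField R}
    (hder : Polynomial.eval x (Polynomial.derivative (q.map (IsLocalRing.residue R))) ≠ 0)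
    {a b : R} (ha : q.eval a = 0) (hb : q.eval b = 0)
    (hra : IsLocalRing.residue R a = x) (hrb : IsLocalRing.residue R b = x) : a = b := by
  obtain ⟨h, hq⟩ := (Polynomial.dvd_iff_isRoot (p := q) (a := a)).mpr ha
  have hb' : (b - a) * h.eval b = 0 := by
    have := hb
    rw [hq] at this
    simpa using this
  have hhb : IsUnit (h.eval b) := by
    have hres : IsLocalRing.residue R (h.eval b) ≠ 0 := by
      have hmap : Polynomial.eval x (h.map (IsLocalRing.residue R)) ≠ 0 := by
        intro h0
        apply hder
        rw [hq]
        simp only [Polynomial.map_mul, Polynomial.map_sub, Polynomial.map_X, Polynomial.map_C,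
          Polynomial.derivative_mul]
        simp [hra, h0]
      rw [← hrb, Polynomial.eval_map, Polynomial.eval₂_hom] at hmap
      exact hmap
    by_contra hu
    exact hres (Ideal.Quotient.eq_zero_iff_mem.mpr
      ((IsLocalRing.mem_maximalIdeal _).mpr hu))
  have hba : b - a = 0 := (IsUnit.mul_left_eq_zero hhb).mp hb'
  exact (sub_eq_zero.mp hba).symm

/-- Existence of a lift of a simple root, in a henselian local ring. -/
theorem aux_root_exists {R : Type*} [CommRing R] [HenselianLocalRing R] (q : R[X])
    (hq : q.Monic) (x : IsLocalRing.ResidueField R)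
    (hx : Polynomial.eval x (q.map (IsLocalRing.residue R)) = 0)
    (hder : Polynomial.eval x (Polynomial.derivative (q.map (IsLocalRing.residue R))) ≠ 0) :
    ∃ a : R, q.eval a = 0 ∧ IsLocalRing.residue R a = x := by
  obtain ⟨a₀, rfl⟩ := IsLocalRing.residue_surjective (R := R) x
  have h1 : q.eval a₀ ∈ maximalIdeal R := by
    rw [Polynomial.eval_map, Polynomial.eval₂_hom] at hx
    exact Ideal.Quotient.eq_zero_iff_mem.mp hx
  have h2 : IsUnit (q.derivative.eval a₀) := by
    rw [Polynomial.derivative_map, Polynomial.eval_map, Polynomial.eval₂_hom] at hder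
    by_contra hu
    exact hder (Ideal.Quotient.eq_zero_iff_mem.mpr ((IsLocalRing.mem_maximalIdeal _).mpr hu))
  obtain ⟨a, ha, hsub⟩ := HenselianLocalRing.is_henselian q hq a₀ h1 h2
  refine ⟨a, ha, ?_⟩
  have : IsLocalRing.residue R (a - a₀) = 0 := Ideal.Quotient.eq_zero_iff_mem.mpr hsub
  rw [map_sub, sub_eq_zero] at this
  exact this

/-- A henselian local ring whose residue field is separable algebraic over a subfield `K`
contains a coefficient field: a ring-theoretic section of the residue map. -/
theorem henselian_local_ring_exists_coefficient_field
    (R : Type*) [CommRing R] [HenselianLocalRing R]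
    (K : Type*) [Field K] (f : K →+* R) :
    letI : Algebra K (IsLocalRing.ResidueField R) :=
      ((IsLocalRing.residue R).comp f).toAlgebra
    ∀ (_ : Algebra.IsAlgebraic K (IsLocalRing.ResidueField R))
      (_ : Algebra.IsSeparable K (IsLocalRing.ResidueField R)),
      ∃ σ : IsLocalRing.ResidueField R →+* R,
        (IsLocalRing.residue R).comp σ = RingHom.id (IsLocalRing.ResidueField R) := by
  intro halg hsep
  set κ := IsLocalRing.ResidueField R with hκ
  set π := IsLocalRing.residue R with hπ
  letI : Algebra K κ := ((IsLocalRing.residue R).comp f).toAlgebra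
  haveI : Algebra.IsAlgebraic K κ := halg
  haveI : Algebra.IsSeparable K κ := hsep
  letI : Algebra K R := f.toAlgebra
  haveI : IsScalarTower K R κ := IsScalarTower.of_algebraMap_eq fun c => rfl
  have hint : ∀ x : κ, IsIntegral K x := fun x => (Algebra.IsAlgebraic.isAlgebraic x).isIntegral
  -- the reduction of the (lifted) minimal polynomial and its basic properties
  have hmapmap : ∀ x : κ, ((minpoly K x).map f).map π = (minpoly K x).map (algebraMap K κ) := by
    intro x
    rw [Polynomial.map_map]
    rfl
  have hroot0 : ∀ x : κ, Polynomial.eval x (((minpoly K x).map f).map π) = 0 := by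
    intro x
    rw [hmapmap, Polynomial.eval_map, ← Polynomial.aeval_def, minpoly.aeval]
  have hder : ∀ x : κ,
      Polynomial.eval x (Polynomial.derivative (((minpoly K x).map f).map π)) ≠ 0 := by
    intro x
    rw [hmapmap, Polynomial.derivative_map, Polynomial.eval_map]
    exact (Algebra.IsSeparable.isSeparable K x).eval₂_derivative_ne_zero
      (algebraMap K κ) (minpoly.aeval K x)
  have hex : ∀ x : κ, ∃ a : R, ((minpoly K x).map f).eval a = 0 ∧ π a = x := fun x =>
    aux_root_exists _ ((minpoly.monic (hint x)).map f) x (hroot0 x) (hder x)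
  choose σ hσroot hσres using hex
  have huniq : ∀ (x : κ) (a : R), ((minpoly K x).map f).eval a = 0 → π a = x → a = σ x :=
    fun x a h1 h2 => aux_root_unique _ (hder x) h1 (hσroot x) h2 (hσres x)
  -- for any two elements of κ, there is a lifted field containing both
  have glem : ∀ x y : κ, ∃ (L : IntermediateField K κ) (g : L →+* R),
      x ∈ L ∧ y ∈ L ∧ ∀ w : L, g w = σ (algebraMap L κ w) := by
    intro x y
    set L : IntermediateField K κ := IntermediateField.adjoin K {x, y} with hL
    haveI : FiniteDimensional K L :=
      IntermediateField.finiteDimensional_adjoin (fun z _ => hint z)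
    haveI : Algebra.IsSeparable K L := Algebra.isSeparable_tower_bot_of_isSeparable K L κ
    obtain ⟨α, hα⟩ := Field.exists_primitive_element K L
    have hαint : IsIntegral K α := IsIntegral.of_finite K α
    set β := algebraMap L κ α with hβ
    have hmin : minpoly K α = minpoly K β :=
      (minpoly.algebraMap_eq (algebraMap L κ).injective α).symm
    have haroot : Polynomial.aeval (σ β) (minpoly K α) = 0 := by
      rw [hmin, Polynomial.aeval_def, ← Polynomial.eval_map]
      exact hσroot β
    let e := IntermediateField.adjoinRootEquivAdjoin K hαint
    let eL := ((IntermediateField.equivOfEq hα).trans IntermediateField.topEquiv).symm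
    let gA : L →ₐ[K] R :=
      ((AdjoinRoot.liftAlgHom (minpoly K α) (Algebra.ofId K R) (σ β) haroot).comp e.symm.toAlgHom).comp eL.toAlgHom
    have hres : ∀ w : L, π (gA w) = algebraMap L κ w := by
      have hcomp : ((IsScalarTower.toAlgHom K R κ).comp gA).comp
            (eL.symm.toAlgHom.comp e.toAlgHom) =
          (IsScalarTower.toAlgHom K L κ).comp (eL.symm.toAlgHom.comp e.toAlgHom) := by
        apply AdjoinRoot.algHom_ext
        show π (gA (eL.symm (e (AdjoinRoot.root _)))) = algebraMap L κ (eL.symm (e (AdjoinRoot.root _)))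
        rw [show e (AdjoinRoot.root (minpoly K α)) = IntermediateField.AdjoinSimple.gen K α from
          IntermediateField.adjoinRootEquivAdjoin_apply_root K hαint]
        have h1 : gA (eL.symm (IntermediateField.AdjoinSimple.gen K α)) = σ β := by
          show (AdjoinRoot.liftAlgHom (minpoly K α) (Algebra.ofId K R) (σ β) haroot)
            (e.symm (eL (eL.symm (IntermediateField.AdjoinSimple.gen K α)))) = σ β
          rw [eL.apply_symm_apply, IntermediateField.adjoinRootEquivAdjoin_symm_apply_gen]
          exact AdjoinRoot.liftAlgHom_root _ _ _ _
        have h2 : algebraMap L κ (eL.symm (IntermediateField.AdjoinSimple.gen K α)) = β := by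
          have : (eL.symm (IntermediateField.AdjoinSimple.gen K α) : L) = α := by
            show (((IntermediateField.equivOfEq hα).trans IntermediateField.topEquiv)
              (IntermediateField.AdjoinSimple.gen K α) : L) = α
            rfl
          rw [this]
        rw [h1, h2, hσres]
      intro w
      have := congrArg (fun t => t (e.symm (eL w))) hcomp
      simp at this
      exact this
    have hval : ∀ w : L, gA w = σ (algebraMap L κ w) := by
      intro w
      apply huniq
      · rw [minpoly.algebraMap_eq (algebraMap L κ).injective w]
        have h0 : Polynomial.aeval (gA w) (minpoly K w) = 0 := by
          rw [Polynomial.aeval_algHom_apply gA w, minpoly.aeval, map_zero]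
        rw [Polynomial.eval_map]
        exact h0
      · exact hres w
    refine ⟨L, gA.toRingHom, ?_, ?_, hval⟩
    · exact IntermediateField.subset_adjoin K {x, y} (by simp)
    · exact IntermediateField.subset_adjoin K {x, y} (by simp)
  have hadd : ∀ x y : κ, σ (x + y) = σ x + σ y := by
    intro x y
    obtain ⟨L, g, hx, hy, hg⟩ := glem x y
    have h1 := hg (⟨x, hx⟩ + ⟨y, hy⟩)
    rw [g.map_add, hg ⟨x, hx⟩, hg ⟨y, hy⟩] at h1
    have h2 : algebraMap L κ (⟨x, hx⟩ + ⟨y, hy⟩) = x + y := by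
      push_cast
      rfl
    rw [h2] at h1
    exact h1.symm
  have hmul : ∀ x y : κ, σ (x * y) = σ x * σ y := by
    intro x y
    obtain ⟨L, g, hx, hy, hg⟩ := glem x y
    have h1 := hg (⟨x, hx⟩ * ⟨y, hy⟩)
    rw [g.map_mul, hg ⟨x, hx⟩, hg ⟨y, hy⟩] at h1
    have h2 : algebraMap L κ (⟨x, hx⟩ * ⟨y, hy⟩) = x * y := by
      push_cast
      rfl
    rw [h2] at h1
    exact h1.symm
  have hone : σ 1 = 1 := by
    obtain ⟨L, g, hx, hy, hg⟩ := glem 1 1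
    have h1 := hg 1
    rw [g.map_one, map_one] at h1
    exact h1.symm
  have hzero : σ 0 = 0 := by
    obtain ⟨L, g, hx, hy, hg⟩ := glem 0 0
    have h1 := hg 0
    rw [g.map_zero, map_zero] at h1
    exact h1.symm
  refine ⟨{ toFun := σ
            map_one' := hone
            map_mul' := hmul
            map_zero' := hzero
            map_add' := hadd }, ?_⟩
  ext x
  exact hσres x
end

section
/- Let F be a field and let n and r be natural numbers with r ≤ n. In the polynomial ring F[X₁,…,Xₙ], let P be the ideal generated by the variables X₁,…,X_r. Then P is a prime ideal and the residue map from the localization of F[X₁,…,Xₙ] at P onto its residue field admits a ring-theoretic section: there is a ring homomorphism from the residue field into the localization whose composite with the residue map is the identity (such a section is given by the rational function field F(X_{r+1},…,Xₙ), which sits inside the localization and maps isomorphically onto the residue field). -/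
open MvPolynomial

section aux

variable {F : Type*} [Field F] {n r : ℕ}

/-- The "set the first `r` variables to zero" ring endomorphism. -/
noncomputable def zeroFirst (F : Type*) [Field F] (n r : ℕ) :
    MvPolynomial (Fin n) F →+* MvPolynomial (Fin n) F :=
  (MvPolynomial.aeval (fun i : Fin n => if (i : ℕ) < r then 0 else MvPolynomial.X i)).toRingHom

lemma zeroFirst_X (i : Fin n) :
    zeroFirst F n r (MvPolynomial.X i) =
      if (i : ℕ) < r then 0 else MvPolynomial.X i := by
  simp [zeroFirst]

lemma sub_zeroFirst_mem (P : Ideal (MvPolynomial (Fin n) F))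
    (hP : P = Ideal.span (MvPolynomial.X '' {i : Fin n | (i : ℕ) < r}))
    (p : MvPolynomial (Fin n) F) : p - zeroFirst F n r p ∈ P := by
  induction p using MvPolynomial.induction_on with
  | C a => simp [zeroFirst]
  | add p q hp hq =>
      have : p + q - zeroFirst F n r (p + q) =
          (p - zeroFirst F n r p) + (q - zeroFirst F n r q) := by
        rw [map_add]; ring
      rw [this]; exact P.add_mem hp hq
  | mul_X p i hp =>
      rw [map_mul, zeroFirst_X]
      by_cases hi : (i : ℕ) < r
      · have hX : MvPolynomial.X i ∈ P := by
          rw [hP]; exact Ideal.subset_span ⟨i, hi, rfl⟩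
        simpa [hi] using P.mul_mem_left p hX
      · have : p * MvPolynomial.X i - zeroFirst F n r p * MvPolynomial.X i =
            (p - zeroFirst F n r p) * MvPolynomial.X i := by ring
        simp only [hi, if_false, this]
        exact P.mul_mem_right _ hp

lemma le_ker_zeroFirst (P : Ideal (MvPolynomial (Fin n) F))
    (hP : P = Ideal.span (MvPolynomial.X '' {i : Fin n | (i : ℕ) < r})) :
    ∀ a ∈ P, zeroFirst F n r a = 0 := by
  intro a ha
  rw [hP] at ha
  rw [← RingHom.mem_ker]
  revert ha
  refine fun ha => Ideal.span_le.mpr ?_ ha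
  rintro x ⟨i, hi, rfl⟩
  simp only [SetLike.mem_coe, RingHom.mem_ker, zeroFirst_X]
  exact if_pos hi

end aux

/-- In `F[X₁,…,Xₙ]`, the ideal generated by the first `r` variables is prime, and the
residue map of the localization at this prime admits a ring-theoretic section. -/
theorem localization_at_variable_prime_has_coefficient_field
    (F : Type*) [Field F] (n r : ℕ) (hr : r ≤ n)
    (P : Ideal (MvPolynomial (Fin n) F))
    (hP : P = Ideal.span (MvPolynomial.X '' {i : Fin n | (i : ℕ) < r})) :
    ∃ hp : P.IsPrime,
      ∃ σ : IsLocalRing.ResidueField (Localization.AtPrime P) →+*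
              Localization.AtPrime P,
        (IsLocalRing.residue (Localization.AtPrime P)).comp σ =
          RingHom.id (IsLocalRing.ResidueField (Localization.AtPrime P)) := by
  set A := MvPolynomial (Fin n) F
  -- the section A⧸P →+* A of the quotient map
  set s : A ⧸ P →+* A := Ideal.Quotient.lift P (zeroFirst F n r) (le_ker_zeroFirst P hP)
    with hs
  have hsec : ∀ a : A, Ideal.Quotient.mk P (s (Ideal.Quotient.mk P a)) =
      Ideal.Quotient.mk P a := by
    intro a
    rw [hs, Ideal.Quotient.lift_mk]
    rw [Ideal.Quotient.mk_eq_mk_iff_sub_mem]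
    have := sub_zeroFirst_mem P hP a
    simpa using P.neg_mem this
  -- P ≠ ⊤
  have hPne : P ≠ ⊤ := by
    intro h
    have h1 : (1 : A) ∈ P := h ▸ Submodule.mem_top
    have hle : P ≤ RingHom.ker (MvPolynomial.constantCoeff : A →+* F) := by
      rw [hP, Ideal.span_le]
      rintro x ⟨i, _, rfl⟩
      simp [RingHom.mem_ker]
    have := hle h1
    simp [RingHom.mem_ker] at this
  have : Nontrivial (A ⧸ P) := Ideal.Quotient.nontrivial_iff.mpr hPne
  -- s is injective, so A⧸P is a domain, so P is prime
  have hsinj : Function.Injective s := by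
    intro x y hxy
    obtain ⟨a, rfl⟩ := Ideal.Quotient.mk_surjective x
    obtain ⟨b, rfl⟩ := Ideal.Quotient.mk_surjective y
    rw [← hsec a, ← hsec b, hxy]
  have : IsDomain (A ⧸ P) := Function.Injective.isDomain s hsinj
  have hp : P.IsPrime := (Ideal.Quotient.isDomain_iff_prime P).mp this
  refine ⟨hp, ?_⟩
  set L := Localization.AtPrime P
  -- the composite A →+* L factoring through A⧸P then s
  set f : A →+* L := (algebraMap A L).comp (s.comp (Ideal.Quotient.mk P)) with hf
  have hfunit : ∀ c : P.primeCompl, IsUnit (f c) := by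
    rintro ⟨c, hc⟩
    have hsc : s (Ideal.Quotient.mk P c) ∈ P.primeCompl := by
      intro hmem
      apply hc
      have := hsec c
      rw [Ideal.Quotient.eq_zero_iff_mem.mpr hmem] at this
      exact Ideal.Quotient.eq_zero_iff_mem.mp this.symm
    exact (IsLocalization.AtPrime.isUnit_to_map_iff L P _).mpr hsc
  set g : L →+* L := IsLocalization.lift (M := P.primeCompl) hfunit with hg
  have hgalg : ∀ a : A, g (algebraMap A L a) = f a := fun a =>
    IsLocalization.lift_eq hfunit a
  -- g kills the maximal ideal
  have hker : ∀ x ∈ IsLocalRing.maximalIdeal L, g x = 0 := by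
    intro x hx
    rw [← Localization.AtPrime.map_eq_maximalIdeal] at hx
    have hle : Ideal.map (algebraMap A L) P ≤ RingHom.ker g := by
      rw [Ideal.map_le_iff_le_comap]
      intro a ha
      simp only [Ideal.mem_comap, RingHom.mem_ker]
      rw [hgalg, hf]
      simp [Ideal.Quotient.eq_zero_iff_mem.mpr ha]
    exact hle hx
  have key : (IsLocalRing.residue L).comp g = IsLocalRing.residue L := by
    refine IsLocalization.ringHom_ext P.primeCompl (RingHom.ext fun a => ?_)
    simp only [RingHom.comp_apply]
    rw [hgalg]
    show IsLocalRing.residue L (f a) = IsLocalRing.residue L (algebraMap A L a)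
    rw [hf]
    simp only [RingHom.comp_apply]
    have hmem : s (Ideal.Quotient.mk P a) - a ∈ P := by
      rw [← Ideal.Quotient.eq_zero_iff_mem, RingHom.map_sub, hsec, sub_self]
    have hmax : (algebraMap A L) (s (Ideal.Quotient.mk P a)) - algebraMap A L a ∈
        IsLocalRing.maximalIdeal L := by
      rw [← RingHom.map_sub]
      exact (IsLocalization.AtPrime.to_map_mem_maximal_iff L P _).mpr hmem
    exact Ideal.Quotient.eq.mpr hmax
  refine ⟨Ideal.Quotient.lift _ g hker, ?_⟩
  refine RingHom.ext fun x => ?_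
  obtain ⟨y, rfl⟩ := IsLocalRing.residue_surjective (R := L) x
  simp only [RingHom.comp_apply, RingHom.id_apply]
  have h1 : (Ideal.Quotient.lift _ g hker) (IsLocalRing.residue L y) = g y :=
    Ideal.Quotient.lift_mk _ _ _
  exact (congrArg (IsLocalRing.residue L) h1).trans (RingHom.congr_fun key y)
end

section
/- Let k be a field and work in the polynomial ring k[x,y] in two variables. Let a, b, c, d be natural numbers with (a,b) ≠ (0,0) and (c,d) ≠ (0,0), and let α, β, γ, δ ∈ k satisfy α·δ − β·γ ≠ 0. If x^a · (γ·x^c + δ·y^d) = y^b · (α·x^c + β·y^d) holds in k[x,y], then a = c and b = d. -/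
open MvPolynomial

private noncomputable def Dexp (p q : ℕ) : Fin 2 →₀ ℕ :=
  Finsupp.single 0 p + Finsupp.single 1 q

private lemma Dexp_inj {p q p' q' : ℕ} : Dexp p q = Dexp p' q' ↔ p = p' ∧ q = q' := by
  constructor
  · intro h
    have h0 := DFunLike.congr_fun h 0
    have h1 := DFunLike.congr_fun h 1
    simp [Dexp, Finsupp.single_apply] at h0 h1
    exact ⟨h0, h1⟩
  · rintro ⟨rfl, rfl⟩; rfl

private lemma M_eq (k : Type*) [Field k] (r : k) (p q : ℕ) :
    C r * (X 0 : MvPolynomial (Fin 2) k) ^ p * X 1 ^ q = monomial (Dexp p q) r := by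
  rw [X_pow_eq_monomial, X_pow_eq_monomial, C_apply, monomial_mul, monomial_mul, Dexp]
  simp

/-- If `x^a/y^b` and `x^c/y^d` are related by a fractional linear transformation
(in cross-multiplied polynomial form), then `(a, b) = (c, d)`. -/
theorem monomial_fractional_linear_rigidity
    (k : Type*) [Field k] (a b c d : ℕ)
    (hab : (a, b) ≠ (0, 0)) (hcd : (c, d) ≠ (0, 0))
    (α β γ δ : k) (h : α * δ - β * γ ≠ 0)
    (heq : (X 0 : MvPolynomial (Fin 2) k) ^ a * (C γ * X 0 ^ c + C δ * X 1 ^ d) =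
      (X 1 : MvPolynomial (Fin 2) k) ^ b * (C α * X 0 ^ c + C β * X 1 ^ d)) :
    a = c ∧ b = d := by
  have hab' : ¬(a = 0 ∧ b = 0) := by
    rintro ⟨rfl, rfl⟩; exact hab rfl
  have hcd' : ¬(c = 0 ∧ d = 0) := by
    rintro ⟨rfl, rfl⟩; exact hcd rfl
  have key : (monomial (Dexp (a + c) 0) γ + monomial (Dexp a d) δ : MvPolynomial (Fin 2) k)
      = monomial (Dexp c b) α + monomial (Dexp 0 (b + d)) β := by
    rw [← M_eq, ← M_eq, ← M_eq, ← M_eq]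
    linear_combination heq
  have E1 := congrArg (coeff (Dexp (a + c) 0)) key
  have E2 := congrArg (coeff (Dexp a d)) key
  have E4 := congrArg (coeff (Dexp 0 (b + d))) key
  simp only [coeff_add, coeff_monomial, Dexp_inj] at E1 E2 E4
  have hγ : γ = 0 := by
    split_ifs at E1 <;>
      first | omega | linear_combination E1 | linear_combination -E1
  have hβ : β = 0 := by
    split_ifs at E4 <;>
      first | omega | linear_combination E4 | linear_combination -E4
  have hαδ : α * δ ≠ 0 := by simpa [hβ, hγ] using h
  by_cases he : c = a ∧ b = d
  · exact ⟨he.1.symm, he.2⟩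
  · exfalso
    apply hαδ
    have hδ : δ = 0 := by
      split_ifs at E2 <;>
        first | omega | (exact absurd (by assumption) he) | linear_combination E2 | linear_combination -E2
    rw [hδ, mul_zero]
end

section
/- Let R be a henselian local integral domain that is integrally closed in its fraction field and whose residue field is algebraically closed of characteristic zero. Let a and b be coprime positive integers and let r₀, r ∈ R. If there exists a unit u of R with r₀^a = u·r^b, then r₀ admits a b-th root in R: there exists s ∈ R with s^b = r₀. -/
open Polynomial IsLocalRing

/-- In a henselian local ring with algebraically closed residue field of characteristic
zero, every unit has a `b`-th root for `b > 0`. -/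
lemma unit_has_pow_root
    (R : Type*) [CommRing R] [HenselianLocalRing R]
    [IsAlgClosed (IsLocalRing.ResidueField R)] [CharZero (IsLocalRing.ResidueField R)]
    (b : ℕ) (hb : 0 < b) (u : Rˣ) : ∃ v : R, v ^ b = (u : R) := by
  obtain ⟨c, hc⟩ := IsAlgClosed.exists_pow_nat_eq (residue R (u : R)) hb
  obtain ⟨a₀, ha₀⟩ := residue_surjective (R := R) c
  have hcne : c ≠ 0 := by
    intro h
    rw [h, zero_pow hb.ne'] at hc
    exact (residue_ne_zero_iff_isUnit (u : R)).mpr u.isUnit hc.symm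
  set f : Polynomial R := X ^ b - C (u : R) with hf
  have hmonic : f.Monic := monic_X_pow_sub_C _ hb.ne'
  have heval : f.eval a₀ ∈ maximalIdeal R := by
    have : residue R (f.eval a₀) = 0 := by
      simp [hf, map_sub, map_pow, ha₀, hc]
    rwa [← Ideal.Quotient.eq_zero_iff_mem]
  have hderiv : IsUnit (f.derivative.eval a₀) := by
    rw [← residue_ne_zero_iff_isUnit]
    have : f.derivative = C (b : R) * X ^ (b - 1) := by
      simp [hf, derivative_X_pow]
    rw [this]
    simp only [eval_mul, eval_pow, eval_C, eval_X, map_mul, map_pow, ha₀]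
    have hbne : (residue R) (b : R) ≠ 0 := by
      rw [map_natCast]
      exact_mod_cast Nat.cast_ne_zero.mpr hb.ne'
    exact mul_ne_zero hbne (pow_ne_zero _ hcne)
  obtain ⟨v, hv, -⟩ := HenselianLocalRing.is_henselian f hmonic a₀ heval hderiv
  refine ⟨v, ?_⟩
  have := hv
  simp only [IsRoot, hf, eval_sub, eval_pow, eval_X, eval_C, sub_eq_zero] at this
  exact this

/-- In an integrally closed henselian local domain with algebraically closed residue field
of characteristic zero, if `r₀^a` is a unit multiple of `r^b` with `a, b` coprime and
positive, then `r₀` admits a `b`-th root. -/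
theorem henselian_root_extraction
    (R : Type*) [CommRing R] [IsDomain R] [HenselianLocalRing R] [IsIntegrallyClosed R]
    [IsAlgClosed (IsLocalRing.ResidueField R)] [CharZero (IsLocalRing.ResidueField R)]
    (a b : ℕ) (ha : 0 < a) (hb : 0 < b) (hab : Nat.Coprime a b)
    (r₀ r : R) (u : Rˣ) (hu : r₀ ^ a = (u : R) * r ^ b) :
    ∃ s : R, s ^ b = r₀ := by
  by_cases hr₀ : r₀ = 0
  · exact ⟨0, by simp [hr₀, zero_pow hb.ne']⟩
  obtain ⟨v, hv⟩ := unit_has_pow_root R b hb u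
  set K := FractionRing R
  set φ := algebraMap R K with hφ
  have hinj : Function.Injective φ := IsFractionRing.injective R K
  have hk0 : φ r₀ ≠ 0 := fun h => hr₀ (hinj (by simpa using h))
  have hw : φ (v * r) ≠ 0 := by
    intro h
    have : φ (v * r) ^ b = φ r₀ ^ a := by
      rw [← map_pow, ← map_pow, mul_pow, hv, ← hu]
    rw [h, zero_pow hb.ne'] at this
    exact pow_ne_zero a hk0 this.symm
  -- units in K
  set k0 : Kˣ := Units.mk0 (φ r₀) hk0
  set w : Kˣ := Units.mk0 (φ (v * r)) hw
  have hwb : w ^ (b : ℤ) = k0 ^ (a : ℤ) := by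
    rw [zpow_natCast, zpow_natCast]
    ext
    simp only [Units.val_pow_eq_pow_val, Units.val_mk0, k0, w]
    rw [← map_pow, ← map_pow, mul_pow, hv, ← hu]
  obtain ⟨x, y, hxy⟩ : ∃ x y : ℤ, (a : ℤ) * x + (b : ℤ) * y = 1 := by
    refine ⟨Nat.gcdA a b, Nat.gcdB a b, ?_⟩
    have h := Nat.gcd_eq_gcd_ab a b
    rw [hab] at h
    push_cast at h
    linarith
  set s' : Kˣ := w ^ x * k0 ^ y with hs'
  have hs'b : s' ^ b = k0 := by
    calc s' ^ b = s' ^ (b : ℤ) := (zpow_natCast _ _).symm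
      _ = (w ^ (b : ℤ)) ^ x * k0 ^ (y * (b : ℤ)) := by
          rw [hs', mul_zpow, ← zpow_mul, ← zpow_mul, mul_comm x (b : ℤ), zpow_mul]
      _ = k0 ^ ((a : ℤ) * x + y * (b : ℤ)) := by
          rw [hwb, ← zpow_mul, ← zpow_add]
      _ = k0 := by rw [show (a : ℤ) * x + y * (b : ℤ) = 1 by linarith, zpow_one]
  -- s' is integral over R
  have hint : IsIntegral R (s' : K) := by
    refine ⟨X ^ b - C r₀, monic_X_pow_sub_C _ hb.ne', ?_⟩
    have : ((s' : K)) ^ b = φ r₀ := by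
      have := congrArg (Units.val) hs'b
      push_cast at this
      simpa [k0] using this
    simp [eval₂_sub, eval₂_pow, this, hφ]
  obtain ⟨s, hs⟩ := IsIntegrallyClosed.isIntegral_iff.mp hint
  refine ⟨s, hinj ?_⟩
  rw [map_pow, hs]
  have := congrArg (Units.val) hs'b
  push_cast at this
  simpa [k0] using this
end
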